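/- Let V, W be orthogonal subspaces of ℂ^n. The pair (V,W) is a support (there exist nonzero vectors v^1,...,v^p ∈ V and w^1,...,w^q ∈ W with ∑_i v^i ∘ conj(v^i) = ∑_j w^j ∘ conj(w^j)) if and only if Φ(σ_V) ∩ Φ(σ_W) ≠ ∅, where σ_V = { c ∈ M_n^h(ℂ) : c ≥ 0, range(c) ⊆ V, tr(c) = 1 }, similarly σ_W, and Φ(m) is the diagonal part of m. -/

import Mathlib

open scoped ComplexOrder

open scoped InnerProductSpace

open Matrix in
private lemma aux_range {n : ℕ} (B : Matrix (Fin n) (Fin n) ℂ) :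
    LinearMap.range (Bᴴ * B).mulVecLin = LinearMap.range Bᴴ.mulVecLin := by
  apply Submodule.eq_of_le_of_finrank_le
  · rw [Matrix.mulVecLin_mul]; exact LinearMap.range_comp_le_range _ _
  · exact le_of_eq (by
      rw [← Matrix.rank, ← Matrix.rank, Matrix.rank_conjTranspose,
        Matrix.rank_conjTranspose_mul_self])

open Matrix in
private lemma aux_exists_vecs {n : ℕ} (V : Submodule ℂ (EuclideanSpace ℂ (Fin n)))
    (c : Matrix (Fin n) (Fin n) ℂ) (hc : c.PosSemidef)
    (hV : ∀ x : Fin n → ℂ, (WithLp.toLp 2 (c.mulVec x) : EuclideanSpace ℂ (Fin n)) ∈ V)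
    (htr : c.trace = 1) :
    ∃ p : ℕ, 0 < p ∧ ∃ v : Fin p → EuclideanSpace ℂ (Fin n),
      (∀ i, v i ∈ V) ∧ (∀ i, v i ≠ 0) ∧ ∀ k, ∑ i, v i k * star (v i k) = c k k := by
  classical
  obtain ⟨B, rfl⟩ : ∃ B : Matrix (Fin n) (Fin n) ℂ, c = Bᴴ * B := by
    open scoped MatrixOrder in
    obtain ⟨X, hX, -, hXc⟩ :=
      CFC.exists_sqrt_of_isSelfAdjoint_of_quasispectrumRestricts hc.isHermitian
        (QuasispectrumRestricts.nnreal_of_nonneg hc.nonneg)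
    exact ⟨X, by rw [← Matrix.star_eq_conjTranspose, hX.star_eq, hXc]⟩
  set u : Fin n → EuclideanSpace ℂ (Fin n) := fun i => WithLp.toLp 2 (fun k => star (B i k)) with hu
  have hsum : ∀ k, ∑ i, u i k * star (u i k) = (Bᴴ * B) k k := by
    intro k
    simp only [Matrix.mul_apply, Matrix.conjTranspose_apply, hu, PiLp.toLp_apply, star_star]
  have huV : ∀ i, u i ∈ V := by
    intro i
    have hmem : (u i).ofLp ∈ LinearMap.range Bᴴ.mulVecLin := by
      refine ⟨Pi.single i 1, ?_⟩
      funext k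
      simp [Matrix.mulVecLin_apply, Matrix.conjTranspose_apply, hu]
    rw [← aux_range] at hmem
    obtain ⟨x, hx⟩ := hmem
    have := hV x
    rw [show (Bᴴ * B).mulVec x = (u i).ofLp from hx] at this
    exact this
  set s : Finset (Fin n) := Finset.univ.filter (fun i => u i ≠ 0) with hs
  have hs0 : s.Nonempty := by
    by_contra h
    have hall : ∀ i, u i = 0 := by
      intro i
      by_contra hi
      exact h ⟨i, by simp [hs, hi]⟩
    have : (Bᴴ * B).trace = 0 := by
      rw [Matrix.trace]
      refine Finset.sum_eq_zero fun k _ => ?_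
      rw [Matrix.diag_apply, ← hsum k]
      refine Finset.sum_eq_zero fun i _ => ?_
      rw [show u i k = 0 by simp [hall i]]
      simp
    rw [htr] at this
    exact one_ne_zero this
  refine ⟨s.card, Finset.card_pos.mpr hs0, fun j => u (s.equivFin.symm j),
    fun j => huV _, fun j => (Finset.mem_filter.mp (s.equivFin.symm j).2).2, fun k => ?_⟩
  have h1 : ∑ j : Fin s.card, u (s.equivFin.symm j) k * star (u (s.equivFin.symm j) k)
      = ∑ i ∈ s, u i k * star (u i k) := by
    rw [← Finset.sum_coe_sort s (fun i => u i k * star (u i k))]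
    exact Equiv.sum_comp s.equivFin.symm (fun i : {x // x ∈ s} => u i k * star (u i k))
  rw [h1, ← hsum k]
  refine Finset.sum_subset (Finset.subset_univ s) fun i _ hi => ?_
  have : u i = 0 := by
    by_contra h
    exact hi (by simp [hs, h])
  rw [show u i k = 0 by simp [this]]
  simp

open Matrix in
private lemma aux_mk {n p : ℕ} (V : Submodule ℂ (EuclideanSpace ℂ (Fin n)))
    (v : Fin p → EuclideanSpace ℂ (Fin n)) (hv : ∀ i, v i ∈ V) :
    ∃ c : Matrix (Fin n) (Fin n) ℂ, c.PosSemidef ∧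
      (∀ x : Fin n → ℂ, (WithLp.toLp 2 (c.mulVec x) : EuclideanSpace ℂ (Fin n)) ∈ V) ∧
      (∀ k, c k k = ∑ i, v i k * star (v i k)) := by
  classical
  set B : Matrix (Fin p) (Fin n) ℂ := Matrix.of (fun i k => star (v i k)) with hB
  refine ⟨Bᴴ * B, Matrix.posSemidef_conjTranspose_mul_self B, ?_, ?_⟩
  · intro x
    have h0 : (Bᴴ * B).mulVec x = Bᴴ.mulVec (B.mulVec x) := (Matrix.mulVec_mulVec _ _ _).symm
    rw [h0]
    set y := B.mulVec x with hy
    have h1 : Bᴴ.mulVec y = ∑ i, y i • (v i : Fin n → ℂ) := by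
      funext k
      rw [Finset.sum_apply k Finset.univ (fun i => y i • (v i : Fin n → ℂ))]
      simp only [Matrix.mulVec, dotProduct, Matrix.conjTranspose_apply, hB,
        Matrix.of_apply, star_star, Pi.smul_apply, smul_eq_mul]
      exact Finset.sum_congr rfl fun i _ => mul_comm _ _
    rw [h1]
    have h2 : WithLp.toLp 2 (∑ i, y i • (v i : Fin n → ℂ)) = ∑ i, y i • v i := by
      ext k; simp
    rw [h2]
    exact Submodule.sum_mem V fun i _ => Submodule.smul_mem V (y i) (hv i)
  · intro k
    simp only [Matrix.mul_apply, Matrix.conjTranspose_apply, hB, Matrix.of_apply, star_star]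

/-- `(V, W)` is a support iff `Φ(σ_V) ∩ Φ(σ_W) ≠ ∅`. -/
theorem support_iff_diag_inter_nonempty (n : ℕ)
    (V W : Submodule ℂ (EuclideanSpace ℂ (Fin n)))
    (hVW : ∀ v ∈ V, ∀ w ∈ W, ⟪v, w⟫_ℂ = 0) :
    (∃ (p q : ℕ), 0 < p ∧ 0 < q ∧
      ∃ (v : Fin p → EuclideanSpace ℂ (Fin n)) (w : Fin q → EuclideanSpace ℂ (Fin n)),
        (∀ i, v i ∈ V) ∧ (∀ i, v i ≠ 0) ∧ (∀ j, w j ∈ W) ∧ (∀ j, w j ≠ 0) ∧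
        ∀ k : Fin n, ∑ i, v i k * star (v i k) = ∑ j, w j k * star (w j k)) ↔
    (Matrix.diag '' {c : Matrix (Fin n) (Fin n) ℂ | c.PosSemidef ∧
        (∀ x : Fin n → ℂ, (WithLp.toLp 2 (c.mulVec x) : EuclideanSpace ℂ (Fin n)) ∈ V) ∧ c.trace = 1} ∩
     Matrix.diag '' {c : Matrix (Fin n) (Fin n) ℂ | c.PosSemidef ∧
        (∀ x : Fin n → ℂ, (WithLp.toLp 2 (c.mulVec x) : EuclideanSpace ℂ (Fin n)) ∈ W) ∧
        c.trace = 1}).Nonempty := by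
  constructor
  · rintro ⟨p, q, hp, hq, v, w, hvV, hv0, hwW, hw0, hsum⟩
    -- normalisation
    set t : ℝ := ∑ k, ∑ i, Complex.normSq (v i k) with ht
    have hmc : ∀ z : ℂ, z * star z = (Complex.normSq z : ℂ) := fun z => Complex.mul_conj z
    have hvk : ∀ k, (∑ i, v i k * star (v i k)) = ((∑ i, Complex.normSq (v i k) : ℝ) : ℂ) := by
      intro k; push_cast; exact Finset.sum_congr rfl fun i _ => hmc _
    have hwk : ∀ k, (∑ j, w j k * star (w j k)) = ((∑ j, Complex.normSq (w j k) : ℝ) : ℂ) := by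
      intro k; push_cast; exact Finset.sum_congr rfl fun j _ => hmc _
    have htw : t = ∑ k, ∑ j, Complex.normSq (w j k) := by
      refine Finset.sum_congr rfl fun k _ => ?_
      have := (hvk k).symm.trans ((hsum k).trans (hwk k))
      exact Complex.ofReal_injective this
    have htpos : 0 < t := by
      have i0 : Fin p := ⟨0, hp⟩
      obtain ⟨k0, hk0⟩ : ∃ k, v i0 k ≠ 0 := by
        by_contra h
        push_neg at h
        exact hv0 i0 (by ext k; simpa using h k)
      refine Finset.sum_pos' (fun k _ => Finset.sum_nonneg fun i _ => Complex.normSq_nonneg _)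
        ⟨k0, Finset.mem_univ _, ?_⟩
      exact Finset.sum_pos' (fun i _ => Complex.normSq_nonneg _)
        ⟨i0, Finset.mem_univ _, Complex.normSq_pos.mpr hk0⟩
    set r : ℝ := (Real.sqrt t)⁻¹ with hr
    have hr2 : r ^ 2 = t⁻¹ := by
      rw [inv_pow, Real.sq_sqrt htpos.le]
    set v' : Fin p → EuclideanSpace ℂ (Fin n) := fun i => (r : ℂ) • v i with hv'
    set w' : Fin q → EuclideanSpace ℂ (Fin n) := fun j => (r : ℂ) • w j with hw'
    have hscale : ∀ (z : ℂ), ((r : ℂ) * z) * star ((r : ℂ) * z) = ((r : ℂ))^2 * (z * star z) := by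
      intro z
      have : star ((r : ℂ)) = (r : ℂ) := Complex.conj_ofReal r
      rw [star_mul', this]; ring
    have hv'k : ∀ k, ∑ i, v' i k * star (v' i k) = ((r:ℂ))^2 * ∑ i, v i k * star (v i k) := by
      intro k
      rw [Finset.mul_sum]
      exact Finset.sum_congr rfl fun i _ => hscale _
    have hw'k : ∀ k, ∑ j, w' j k * star (w' j k) = ((r:ℂ))^2 * ∑ j, w j k * star (w j k) := by
      intro k
      rw [Finset.mul_sum]
      exact Finset.sum_congr rfl fun j _ => hscale _
    obtain ⟨c, hcpsd, hcV, hcdiag⟩ := aux_mk V v' fun i => Submodule.smul_mem V _ (hvV i)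
    obtain ⟨d, hdpsd, hdW, hddiag⟩ := aux_mk W w' fun j => Submodule.smul_mem W _ (hwW j)
    have hct : c.trace = 1 := by
      rw [Matrix.trace]
      have : ∀ k, c.diag k = (((t⁻¹ * ∑ i, Complex.normSq (v i k)) : ℝ) : ℂ) := by
        intro k
        rw [Matrix.diag_apply, hcdiag k, hv'k k, hvk k, ← hr2]
        push_cast
        ring
      rw [Finset.sum_congr rfl fun k _ => this k, ← Complex.ofReal_sum, ← Finset.mul_sum, ← ht,
        inv_mul_cancel₀ htpos.ne', Complex.ofReal_one]
    have hdt : d.trace = 1 := by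
      rw [Matrix.trace]
      have : ∀ k, d.diag k = (((t⁻¹ * ∑ j, Complex.normSq (w j k)) : ℝ) : ℂ) := by
        intro k
        rw [Matrix.diag_apply, hddiag k, hw'k k, hwk k, ← hr2]
        push_cast
        ring
      rw [Finset.sum_congr rfl fun k _ => this k, ← Complex.ofReal_sum, ← Finset.mul_sum, ← htw,
        inv_mul_cancel₀ htpos.ne', Complex.ofReal_one]
    have hdiag : c.diag = d.diag := by
      funext k
      rw [Matrix.diag_apply, Matrix.diag_apply, hcdiag k, hddiag k, hv'k k, hw'k k, hsum k]
    exact ⟨c.diag, ⟨c, ⟨hcpsd, hcV, hct⟩, rfl⟩, ⟨d, ⟨hdpsd, hdW, hdt⟩, hdiag.symm⟩⟩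
  · rintro ⟨x, ⟨c, ⟨hcpsd, hcV, hct⟩, hcx⟩, ⟨d, ⟨hdpsd, hdW, hdt⟩, hdx⟩⟩
    obtain ⟨p, hp, v, hvV, hv0, hvd⟩ := aux_exists_vecs V c hcpsd hcV hct
    obtain ⟨q, hq, w, hwW, hw0, hwd⟩ := aux_exists_vecs W d hdpsd hdW hdt
    refine ⟨p, q, hp, hq, v, w, hvV, hv0, hwW, hw0, fun k => ?_⟩
    rw [hvd k, hwd k]
    have : c.diag k = d.diag k := by rw [hcx, hdx]
    simpa using this
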